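/- Let N = 1 and m > 1, and assume (H1). If u is a radial solution on [0,R), then the set of critical points of u in [0,R) has a greatest element: there exists r* ∈ [0,R) with u'(r*) = 0 and u'(r) ≠ 0 for every r ∈ (r*, R). -/

import Mathlib

open Filter Set MeasureTheory intervalIntegral

noncomputable section

/-- The half-open interval `[0, R)` inside `ℝ`, where `R : EReal` may be `∞`. -/
def domR (R : EReal) : Set ℝ := {r : ℝ | 0 ≤ r ∧ (r : EReal) < R}

/-- The filter describing `r → R⁻` inside `ℝ` (it equals `atTop` when `R = ∞`). -/
def limR (R : EReal) : Filter ℝ := Filter.comap Real.toEReal (nhdsWithin R (Set.Iio R))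

/-- Assumption (H1): `f` is continuous on `(0,∞)`, nonpositive on `(0,b]` and
positive on `(b,∞)`, with `b > 0`. -/
def H1cond (b : ℝ) (f : ℝ → ℝ) : Prop :=
  0 < b ∧ ContinuousOn f (Set.Ioi 0) ∧
    (∀ u : ℝ, 0 < u → u ≤ b → f u ≤ 0) ∧ (∀ u : ℝ, b < u → 0 < f u)

/-- `u` (with derivative `u'`) is a radial solution on `[0, R)` of
`(r^{N-1} |u'|^{m-2} u')' = - r^{N-1} f(u)`, positive, `C¹` up to the origin,
with `u'(0) = 0` and `u, u' → 0` as `r → R`. -/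
def IsRadialSolution (N : ℕ) (m : ℝ) (f : ℝ → ℝ) (R : EReal) (u u' : ℝ → ℝ) : Prop :=
  0 < R ∧
  (∀ r ∈ domR R, HasDerivWithinAt u (u' r) (domR R) r) ∧
  ContinuousOn u' (domR R) ∧
  (∀ r ∈ domR R, 0 < u r) ∧
  u' 0 = 0 ∧
  (∀ r : ℝ, 0 < r → (r : EReal) < R →
    HasDerivAt (fun s : ℝ => s ^ (N - 1) * |u' s| ^ (m - 2) * u' s)
      (-(r ^ (N - 1) * f (u r))) r) ∧
  Filter.Tendsto u (limR R) (nhds 0) ∧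
  Filter.Tendsto u' (limR R) (nhds 0)

/-- `rr` is the (strictly decreasing) inverse on `(0, α)` of a radial solution `u`,
with derivatives `rr'`, `rr''`, satisfying the transformed ODE
`(m-1) r'' = (N-1) r'²/r + f(u) |r'|^m r'`. -/
def IsInvSol (N : ℕ) (m α : ℝ) (f : ℝ → ℝ) (R : EReal) (u rr rr' rr'' : ℝ → ℝ) : Prop :=
  (∀ v ∈ Set.Ioo 0 α,
    0 < rr v ∧ (rr v : EReal) < R ∧ u (rr v) = v ∧
    HasDerivAt rr (rr' v) v ∧ rr' v < 0 ∧ HasDerivAt rr' (rr'' v) v ∧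
    (m - 1) * rr'' v = ((N : ℝ) - 1) * (rr' v) ^ 2 / rr v + f v * |rr' v| ^ m * rr' v) ∧
  (∀ x : ℝ, 0 < x → (x : EReal) < R → ∃ v ∈ Set.Ioo 0 α, rr v = x)

/-- The function `ω(u) = r(u)^{N-1} / (r'(u) |r'(u)|^{m-2})`. -/
def omegaF (N : ℕ) (m : ℝ) (rr rr' : ℝ → ℝ) (v : ℝ) : ℝ :=
  rr v ^ (N - 1) / (rr' v * |rr' v| ^ (m - 2))

/-- The function `P(u) = a u ω(u) + r(u)^N ((m-1)/m · 1/|r'(u)|^m + (a/N) u f(u))`. -/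
def PF (N : ℕ) (m a : ℝ) (f rr rr' : ℝ → ℝ) (v : ℝ) : ℝ :=
  a * v * omegaF N m rr rr' v +
    rr v ^ N * ((m - 1) / m * (1 / |rr' v| ^ m) + a / (N : ℝ) * v * f v)


private lemma phi_abs_le (m : ℝ) (hm : 1 < m) (x : ℝ) :
    |(|x| ^ (m - 2) * x)| ≤ |x| ^ (m - 1) := by
  rcases eq_or_ne x 0 with rfl | h
  · simp [Real.zero_rpow (by linarith : m - 1 ≠ 0)]
  · have hx : (0:ℝ) < |x| := abs_pos.2 h
    rw [abs_mul, abs_of_nonneg (Real.rpow_nonneg (abs_nonneg x) _)]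
    rw [show m - 1 = (m - 2) + 1 by ring, Real.rpow_add hx, Real.rpow_one]

private lemma phi_cont (m : ℝ) (hm : 1 < m) :
    Continuous (fun x : ℝ => |x| ^ (m - 2) * x) := by
  rw [continuous_iff_continuousAt]
  intro x
  rcases eq_or_ne x 0 with rfl | hx
  · have h0 : |(0:ℝ)| ^ (m - 2) * (0:ℝ) = 0 := by simp
    rw [ContinuousAt, h0, tendsto_zero_iff_abs_tendsto_zero]
    apply squeeze_zero (fun y => abs_nonneg _) (fun y => phi_abs_le m hm y)
    have hc : ContinuousAt (fun y : ℝ => |y| ^ (m - 1)) 0 :=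
      (Real.continuousAt_rpow_const _ _ (Or.inr (by linarith))).comp
        continuous_abs.continuousAt
    have h2 := hc.tendsto
    simpa [Real.zero_rpow (by linarith : m - 1 ≠ 0)] using h2
  · exact ((Real.continuousAt_rpow_const _ _ (Or.inl (abs_ne_zero.2 hx))).comp
      continuous_abs.continuousAt).mul continuousAt_id

private lemma phi_sign (m : ℝ) {x : ℝ} (h : 0 ≤ |x| ^ (m - 2) * x) : 0 ≤ x := by
  by_contra hx
  push_neg at hx
  have hp : (0:ℝ) < |x| ^ (m - 2) := Real.rpow_pos_of_pos (abs_pos.2 hx.ne) _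
  nlinarith

private lemma limR_mem (R : EReal) {a : ℝ} (ha : (a : EReal) < R) :
    {r : ℝ | a < r ∧ (r : EReal) < R} ∈ limR R := by
  refine Filter.mem_comap.2 ⟨Set.Ioo (a : EReal) R, Ioo_mem_nhdsLT_of_mem ⟨ha, le_refl R⟩, ?_⟩
  intro r hr
  exact ⟨EReal.coe_lt_coe_iff.1 hr.1, hr.2⟩

private lemma limR_eventually (R : EReal) (hR : 0 < R) {p : ℝ → Prop}
    (h : ∀ᶠ r in limR R, p r) :
    ∃ r₁ : ℝ, 0 ≤ r₁ ∧ (r₁ : EReal) < R ∧ ∀ r : ℝ, r₁ < r → (r : EReal) < R → p r := by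
  rcases Filter.mem_comap.1 h with ⟨t, ht, hsub⟩
  rcases (nhdsLT_basis_of_exists_lt ⟨0, hR⟩).mem_iff.1 ht with ⟨a, haR, hIoo⟩
  rcases EReal.exists_between_coe_real haR with ⟨x, hax, hxR⟩
  refine ⟨max x 0, le_max_right _ _, ?_, ?_⟩
  · rcases le_total x 0 with h0 | h0
    · simpa [max_eq_right h0] using hR
    · simpa [max_eq_left h0] using hxR
  · intro r hr hrR
    apply hsub
    apply hIoo
    refine ⟨lt_of_lt_of_le hax ?_, hrR⟩
    exact EReal.coe_le_coe_iff.2 (le_trans (le_max_left x 0) hr.le)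

private lemma limR_neBot (R : EReal) (hR : 0 < R) : (limR R).NeBot := by
  rw [limR, Filter.comap_neBot_iff]
  intro t ht
  rcases (nhdsLT_basis_of_exists_lt ⟨0, hR⟩).mem_iff.1 ht with ⟨a, haR, hIoo⟩
  rcases EReal.exists_between_coe_real haR with ⟨x, hax, hxR⟩
  exact ⟨x, hIoo ⟨hax, hxR⟩⟩


/-- for `N = 1`, `m > 1`, under (H1), the set of critical points of a radial
solution in `[0, R)` has a greatest element `r*`. -/
theorem stmt8 (m b : ℝ) (f : ℝ → ℝ) (hm : 1 < m) (hf : H1cond b f)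
    (R : EReal) (u u' : ℝ → ℝ) (hu : IsRadialSolution 1 m f R u u') :
    ∃ rs : ℝ, 0 ≤ rs ∧ (rs : EReal) < R ∧ u' rs = 0 ∧
      ∀ r : ℝ, rs < r → (r : EReal) < R → u' r ≠ 0 := by
  obtain ⟨hRpos, hder, hcu', hupos, hu'0, hode, hulim, hu'lim⟩ := hu
  obtain ⟨hb, hfc, hfle, hfpos⟩ := hf
  haveI := limR_neBot R hRpos
  set g : ℝ → ℝ := fun s => |u' s| ^ (m - 2) * u' s with hgdef
  have hgder : ∀ r : ℝ, 0 < r → (r : EReal) < R → HasDerivAt g (-(f (u r))) r := by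
    intro r hr hrR
    have h := hode r hr hrR
    simpa [g] using h
  have hcu : ContinuousOn u (domR R) := fun r hr => (hder r hr).continuousWithinAt
  -- tail interval where u < b
  have hevb : ∀ᶠ r in limR R, u r < b := hulim (Iio_mem_nhds hb)
  obtain ⟨r₂, hr₂0, hr₂R, hr₂⟩ := limR_eventually R hRpos hevb
  -- Claim A: no critical point beyond r₂
  have claimA : ∀ r₀ : ℝ, r₂ < r₀ → (r₀ : EReal) < R → u' r₀ ≠ 0 := by
    intro r₀ hr₀2 hr₀R hu'r₀
    have hr₀pos : 0 < r₀ := lt_of_le_of_lt hr₂0 hr₀2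
    have hc : 0 < u r₀ := hupos r₀ ⟨hr₀pos.le, hr₀R⟩
    have key : ∀ r : ℝ, r₀ < r → (r : EReal) < R → u r₀ ≤ u r := by
      intro r hr hrR
      have hIccdom : Set.Icc r₀ r ⊆ domR R := by
        intro s hs
        exact ⟨le_trans hr₀pos.le hs.1,
          lt_of_le_of_lt (EReal.coe_le_coe_iff.2 hs.2) hrR⟩
      have hgc : ContinuousOn g (Set.Icc r₀ r) :=
        (phi_cont m hm).comp_continuousOn (hcu'.mono hIccdom)
      have hders : ∀ s ∈ Set.Ioo r₀ r, HasDerivAt g (-(f (u s))) s := fun s hs =>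
        hgder s (lt_trans hr₀pos hs.1)
          (lt_of_le_of_lt (EReal.coe_le_coe_iff.2 hs.2.le) hrR)
      have hgmono : MonotoneOn g (Set.Icc r₀ r) := by
        apply monotoneOn_of_deriv_nonneg (convex_Icc _ _) hgc
        · rw [interior_Icc]
          exact fun s hs => (hders s hs).differentiableAt.differentiableWithinAt
        · rw [interior_Icc]
          intro s hs
          rw [(hders s hs).deriv]
          have hus : 0 < u s := hupos s (hIccdom ⟨hs.1.le, hs.2.le⟩)
          have husb : u s < b := hr₂ s (lt_trans hr₀2 hs.1)
            (lt_of_le_of_lt (EReal.coe_le_coe_iff.2 hs.2.le) hrR)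
          linarith [hfle (u s) hus husb.le]
      have hg0 : g r₀ = 0 := by simp [g, hu'r₀]
      have hu'nonneg : ∀ s ∈ Set.Icc r₀ r, 0 ≤ u' s := by
        intro s hs
        have h1 : g r₀ ≤ g s := hgmono ⟨le_refl r₀, hr.le⟩ hs hs.1
        rw [hg0] at h1
        exact phi_sign m h1
      have hud : ∀ s ∈ Set.Ioo r₀ r, HasDerivAt u (u' s) s := by
        intro s hs
        exact (hder s (hIccdom ⟨hs.1.le, hs.2.le⟩)).hasDerivAt
          (Filter.mem_of_superset (Ioo_mem_nhds hs.1 hs.2)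
            (subset_trans Set.Ioo_subset_Icc_self hIccdom))
      have humono : MonotoneOn u (Set.Icc r₀ r) := by
        apply monotoneOn_of_deriv_nonneg (convex_Icc _ _) (hcu.mono hIccdom)
        · rw [interior_Icc]
          exact fun s hs => (hud s hs).differentiableAt.differentiableWithinAt
        · rw [interior_Icc]
          intro s hs
          rw [(hud s hs).deriv]
          exact hu'nonneg s ⟨hs.1.le, hs.2.le⟩
      exact humono ⟨le_refl r₀, hr.le⟩ ⟨hr.le, le_refl r⟩ hr.le
    -- contradiction with u → 0
    have h1 : ∀ᶠ r in limR R, r₀ < r ∧ (r : EReal) < R := limR_mem R hr₀R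
    have h2 : ∀ᶠ r in limR R, u r < u r₀ := hulim (Iio_mem_nhds hc)
    rcases (h2.and h1).exists with ⟨r, hruc, hrr₀, hrR⟩
    exact absurd (key r hrr₀ hrR) (not_le.2 hruc)
  -- the set of critical points in [0, r₂]
  have hIccdom2 : Set.Icc (0:ℝ) r₂ ⊆ domR R := fun s hs =>
    ⟨hs.1, lt_of_le_of_lt (EReal.coe_le_coe_iff.2 hs.2) hr₂R⟩
  have hTclosed : IsClosed (Set.Icc (0:ℝ) r₂ ∩ u' ⁻¹' {0}) :=
    (hcu'.mono hIccdom2).preimage_isClosed_of_isClosed isClosed_Icc isClosed_singleton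
  have hTcomp : IsCompact (Set.Icc (0:ℝ) r₂ ∩ u' ⁻¹' {0}) :=
    isCompact_Icc.of_isClosed_subset hTclosed Set.inter_subset_left
  have hTne : (Set.Icc (0:ℝ) r₂ ∩ u' ⁻¹' {0}).Nonempty :=
    ⟨0, ⟨le_refl 0, hr₂0⟩, by simpa using hu'0⟩
  obtain ⟨rs, hrsmem, hub⟩ := hTcomp.exists_isGreatest hTne
  refine ⟨rs, hrsmem.1.1, lt_of_le_of_lt (EReal.coe_le_coe_iff.2 hrsmem.1.2) hr₂R,
    by simpa using hrsmem.2, ?_⟩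
  intro r hrrs hrR hu'r
  rcases le_or_gt r r₂ with hle | hlt
  · have hrT : r ∈ Set.Icc (0:ℝ) r₂ ∩ u' ⁻¹' {0} :=
      ⟨⟨le_trans hrsmem.1.1 hrrs.le, hle⟩, by simpa using hu'r⟩
    exact absurd (hub hrT) (not_le.2 hrrs)
  · exact claimA r hlt hrR hu'r


end
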